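/- arXiv:math/0202224 — 4 statements merged into one kernel-verified Lean document; each statement's English description precedes it below -/
import Mathlib

section
/- Let p be a prime, G cyclic of order p, and J an F_p[G]-module. Every free F_p[G]-submodule of J (on possibly infinitely many generators) is a direct summand of J. -/
open Polynomial MonoidAlgebra

/-- The group algebra `𝔽_p[G]` for `G` the cyclic group of order `p`
(realized concretely as `Multiplicative (ZMod p)`). -/
abbrev GroupAlg (p : ℕ) := MonoidAlgebra (ZMod p) (Multiplicative (ZMod p))

variable (p : ℕ) [Fact p.Prime]

noncomputable def sigma : GroupAlg p := MonoidAlgebra.of (ZMod p) (Multiplicative (ZMod p)) (Multiplicative.ofAdd 1)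

noncomputable def tt : GroupAlg p := sigma p - 1

instance : CharP (GroupAlg p) p :=
  charP_of_injective_algebraMap (R := ZMod p) (fun a b h => by
    rw [MonoidAlgebra.coe_algebraMap] at h
    simp only [Function.comp_apply] at h
    simpa using MonoidAlgebra.single_right_inj.mp h) p


lemma sigma_pow_p : (sigma p) ^ p = 1 := by
  rw [sigma, ← map_pow]
  have : (Multiplicative.ofAdd (1 : ZMod p)) ^ p = 1 := by
    rw [← ofAdd_nsmul]
    simp
  rw [this, map_one]

lemma tt_pow_p : (tt p) ^ p = 0 := by
  rw [tt, sub_pow_char, sigma_pow_p, one_pow, sub_self]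

noncomputable def phi : (ZMod p)[X] →ₐ[ZMod p] GroupAlg p := Polynomial.aeval (tt p)

lemma phi_surjective : Function.Surjective (phi p) := by
  intro x
  induction x using MonoidAlgebra.induction_on with
  | of g =>
    obtain ⟨n, rfl⟩ : ∃ n : ℕ, (Multiplicative.ofAdd (1 : ZMod p)) ^ n = g := by
      refine ⟨(Multiplicative.toAdd g).val, ?_⟩
      rw [← ofAdd_nsmul]
      rw [show ((Multiplicative.toAdd g).val • (1 : ZMod p)) = Multiplicative.toAdd g by
        rw [nsmul_eq_mul, mul_one, ZMod.natCast_val, ZMod.cast_id]]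
      exact ofAdd_toAdd g
    refine ⟨(X + 1) ^ n, ?_⟩
    rw [map_pow, map_pow, phi]
    simp [tt, sigma]
  | add f g hf hg =>
    obtain ⟨a, rfl⟩ := hf; obtain ⟨b, rfl⟩ := hg; exact ⟨a + b, map_add _ _ _⟩
  | smul r f hf =>
    obtain ⟨a, rfl⟩ := hf
    exact ⟨C r * a, by rw [map_mul]; simp [phi, Algebra.smul_def]⟩

lemma finrank_groupAlg : Module.finrank (ZMod p) (GroupAlg p) = p := by
  have b : Module.Basis (Multiplicative (ZMod p)) (ZMod p) (GroupAlg p) := MonoidAlgebra.basis _ _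
  rw [Module.finrank_eq_card_basis b]
  simp [ZMod.card]

instance : IsPrincipalIdealRing (GroupAlg p) :=
  IsPrincipalIdealRing.of_surjective (phi p).toRingHom (phi_surjective p)

lemma Xp_mem_ker : (X : (ZMod p)[X]) ^ p ∈ RingHom.ker (phi p) := by
  rw [RingHom.mem_ker, map_pow, phi, aeval_X, tt_pow_p]

lemma ker_phi : RingHom.ker (phi p) = Ideal.span {(X : (ZMod p)[X]) ^ p} := by
  obtain ⟨d, hd⟩ := (IsPrincipalIdealRing.principal (RingHom.ker (phi p))).principal
  rw [Ideal.submodule_span_eq] at hd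
  have hdvd : d ∣ (X : (ZMod p)[X]) ^ p := by
    rw [← Ideal.mem_span_singleton, ← hd]
    exact Xp_mem_ker p
  obtain ⟨m, hm, hassoc⟩ := (dvd_prime_pow Polynomial.prime_X p).mp hdvd
  have hspan : RingHom.ker (phi p) = Ideal.span {(X : (ZMod p)[X]) ^ m} := by
    rw [hd, Ideal.span_singleton_eq_span_singleton.mpr hassoc]
  have e := Ideal.quotientKerAlgEquivOfSurjective (f := phi p) (phi_surjective p)
  have h1 : Module.finrank (ZMod p) ((ZMod p)[X] ⧸ RingHom.ker (phi p)) = p := by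
    rw [e.toLinearEquiv.finrank_eq, finrank_groupAlg]
  rw [hspan] at h1
  have h2 : Module.finrank (ZMod p) (AdjoinRoot ((X : (ZMod p)[X]) ^ m)) = m := by
    rw [(AdjoinRoot.powerBasis (f := (X : (ZMod p)[X]) ^ m) (pow_ne_zero m X_ne_zero)).finrank]
    simp [AdjoinRoot.powerBasis]
  have : m = p := h2.symm.trans (by exact h1)
  rw [hspan, this]

lemma exists_div (k : ℕ) (hk : k ≤ p) (r : GroupAlg p) (h : tt p ^ (p - k) * r = 0) :
    ∃ s, r = tt p ^ k * s := by
  obtain ⟨g, rfl⟩ := phi_surjective p r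
  have hmem : (X : (ZMod p)[X]) ^ (p - k) * g ∈ RingHom.ker (phi p) := by
    rw [RingHom.mem_ker, map_mul, map_pow, phi, aeval_X]
    exact h
  rw [ker_phi, Ideal.mem_span_singleton] at hmem
  obtain ⟨q, hq⟩ := hmem
  refine ⟨phi p q, ?_⟩
  have hg : g = X ^ k * q := by
    have hX : (X : (ZMod p)[X]) ^ (p - k) ≠ 0 := pow_ne_zero _ X_ne_zero
    apply mul_left_cancel₀ hX
    rw [← mul_assoc, ← pow_add]
    rw [Nat.sub_add_cancel hk] at *
    exact hq
  rw [hg, map_mul, map_pow, phi, aeval_X]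

lemma span_eq_span_tt_pow (a : GroupAlg p) (ha : a ≠ 0) :
    ∃ k < p, Ideal.span {a} = Ideal.span {tt p ^ k} := by
  obtain ⟨g, rfl⟩ := phi_surjective p a
  have hg0 : g ≠ 0 := by rintro rfl; simp at ha
  obtain ⟨q, hgq, hndvd⟩ := Polynomial.exists_eq_pow_rootMultiplicity_mul_and_not_dvd g hg0 0
  rw [map_zero, sub_zero] at hgq hndvd
  set k := g.rootMultiplicity 0 with hk
  have hkp : k < p := by
    by_contra hge
    push_neg at hge
    apply ha
    rw [← RingHom.mem_ker, ker_phi, Ideal.mem_span_singleton, hgq]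
    exact Dvd.dvd.mul_right (pow_dvd_pow X hge) q
  have hunit : IsUnit (phi p q) := by
    have hcop : IsCoprime q ((X : (ZMod p)[X]) ^ p) :=
      ((Polynomial.irreducible_X.coprime_iff_not_dvd.mpr hndvd).symm).pow_right
    obtain ⟨u, v, huv⟩ := hcop
    refine IsUnit.of_mul_eq_one (phi p u) ?_
    have := congrArg (phi p) huv
    rw [map_add, map_mul, map_mul, map_one, map_pow, phi, aeval_X, tt_pow_p] at this
    rw [mul_comm]
    simpa [phi] using this
  refine ⟨k, hkp, ?_⟩
  have : phi p g = tt p ^ k * phi p q := by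
    rw [hgq, map_mul, map_pow, phi, aeval_X]
  rw [this, Ideal.span_singleton_mul_right_unit hunit]

lemma exists_div_module {M : Type} [AddCommGroup M] [Module (GroupAlg p) M]
    [Module.Free (GroupAlg p) M] (k : ℕ) (hk : k ≤ p) (n : M)
    (h : tt p ^ (p - k) • n = 0) : ∃ m, n = tt p ^ k • m := by
  classical
  set b := Module.Free.chooseBasis (GroupAlg p) M
  set c := b.repr n with hc
  have hci : ∀ i, tt p ^ (p - k) * c i = 0 := by
    intro i
    have := congrArg (fun x => b.repr x i) h
    simpa [hc, Finsupp.smul_apply, smul_eq_mul] using this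
  have hex : ∀ i, ∃ s, c i = tt p ^ k * s := fun i => exists_div p k hk (c i) (hci i)
  set s : Module.Free.ChooseBasisIndex (GroupAlg p) M → GroupAlg p :=
    fun i => if c i = 0 then 0 else Classical.choose (hex i) with hs
  have hsupp : ∀ i, s i ≠ 0 → i ∈ c.support := by
    intro i hi
    rw [Finsupp.mem_support_iff]
    intro h0
    apply hi
    simp [hs, h0]
  refine ⟨b.repr.symm (Finsupp.onFinset c.support s hsupp), ?_⟩
  apply b.repr.injective
  rw [map_smul, LinearEquiv.apply_symm_apply]
  refine Finsupp.ext fun i => ?_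
  rw [Finsupp.smul_apply, smul_eq_mul, Finsupp.onFinset_apply]
  by_cases h0 : c i = 0
  · simp [h0, hs]; exact h0
  · rw [hs]
    simp only [h0, if_false]
    exact Classical.choose_spec (hex i)

lemma baer_free {M : Type} [AddCommGroup M] [Module (GroupAlg p) M]
    [Module.Free (GroupAlg p) M] : Module.Baer (GroupAlg p) M := by
  intro I g
  obtain ⟨a, ha⟩ := (IsPrincipalIdealRing.principal I).principal
  rw [Ideal.submodule_span_eq] at ha
  by_cases ha0 : a = 0
  · refine ⟨0, fun x mem => ?_⟩
    have hx : x = 0 := by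
      rw [ha, ha0, Ideal.span_singleton_eq_bot.mpr rfl] at mem
      exact mem
    subst hx
    have : (⟨0, mem⟩ : I) = 0 := rfl
    simp only [LinearMap.zero_apply, this, map_zero]
  · obtain ⟨k, hkp, hspan⟩ := span_eq_span_tt_pow p a ha0
    rw [hspan] at ha
    have hmem : tt p ^ k ∈ I := ha ▸ Ideal.mem_span_singleton_self _
    set n := g ⟨tt p ^ k, hmem⟩ with hn
    have hsmul : tt p ^ (p - k) • n = 0 := by
      rw [hn, ← map_smul]
      have : (tt p ^ (p - k) • (⟨tt p ^ k, hmem⟩ : I)) = 0 := by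
        apply Subtype.ext
        rw [Submodule.coe_smul, smul_eq_mul, ← pow_add, Nat.sub_add_cancel hkp.le, tt_pow_p]
        rfl
      rw [this, map_zero]
    obtain ⟨m, hm⟩ := exists_div_module p k hkp.le n hsmul
    refine ⟨LinearMap.toSpanSingleton (GroupAlg p) M m, fun x mem => ?_⟩
    have hx := mem
    rw [ha, Ideal.mem_span_singleton'] at hx
    obtain ⟨r, hr⟩ := hx
    have : (⟨x, mem⟩ : I) = r • ⟨tt p ^ k, hmem⟩ := by
      apply Subtype.ext
      rw [Submodule.coe_smul, smul_eq_mul]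
      exact hr.symm
    rw [this, map_smul, ← hn, hm, LinearMap.toSpanSingleton_apply, ← hr, smul_smul]

/-- Every free `𝔽_p[G]`-submodule of an `𝔽_p[G]`-module `J` (on possibly infinitely many
generators) is a direct summand of `J`. -/
theorem free_submodule_isCompl
    (p : ℕ) [Fact p.Prime]
    (J : Type) [AddCommGroup J] [Module (GroupAlg p) J]
    (N : Submodule (GroupAlg p) J) (hfree : Module.Free (GroupAlg p) N) :
    ∃ N' : Submodule (GroupAlg p) J, IsCompl N N' := by
  have hinj : Module.Injective (GroupAlg p) N := (baer_free p).injective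
  obtain ⟨π, hπ⟩ := hinj.out N.subtype N.injective_subtype LinearMap.id
  exact ⟨LinearMap.ker π, LinearMap.isCompl_of_proj fun x => hπ x⟩
end

section
/- Let F be a field of characteristic not p containing a primitive p-th root of unity ξ_p, let a ∈ F with K = F(a^{1/p}) a cyclic extension of degree p, and let σ generate Gal(K/F) with σ(a^{1/p})/a^{1/p} = ξ_p. Let J = K^×/(K^×)^p and let J_1 = J^G be the fixed submodule under G = Gal(K/F). If ξ_p is not a norm from K^× to F^×, then J_1 equals ε(F^×), the image of F^× in K^×/(K^×)^p. -/
noncomputable section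

namespace KummerSetup

variable (p : ℕ) (F K : Type) [Field F] [Field K] [Algebra F K]

/-- The subgroup of `p`-th powers in `Kˣ`. -/
def powSub : Subgroup Kˣ := (powMonoidHom p : Kˣ →* Kˣ).range

/-- `J = Kˣ/(Kˣ)^p`. -/
abbrev Jgrp := Kˣ ⧸ powSub p K

/-- The class of a unit in `J`. -/
def mkJ : Kˣ →* Jgrp p K := QuotientGroup.mk' (powSub p K)

/-- Action of an `F`-automorphism of `K` on units. -/
def galU (τ : K ≃ₐ[F] K) : Kˣ →* Kˣ := Units.map (τ.toAlgHom.toRingHom.toMonoidHom)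

lemma powSub_le (τ : K ≃ₐ[F] K) : powSub p K ≤ (powSub p K).comap (galU F K τ) := by
  rintro x ⟨y, rfl⟩
  exact ⟨galU F K τ y, by simp [powMonoidHom, map_pow]⟩

/-- The induced action of an `F`-automorphism of `K` on `J = Kˣ/(Kˣ)^p`. -/
def galJ (τ : K ≃ₐ[F] K) : Jgrp p K →* Jgrp p K :=
  QuotientGroup.map _ _ (galU F K τ) (powSub_le p F K τ)

/-- The subgroup `J^G` of `J` fixed by all of `Gal(K/F)`. -/
def fixedJ : Subgroup (Jgrp p K) where
  carrier := {x | ∀ τ : K ≃ₐ[F] K, galJ p F K τ x = x}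
  one_mem' := fun τ => map_one _
  mul_mem' := by intro a b ha hb τ; rw [map_mul, ha τ, hb τ]
  inv_mem' := by intro a ha τ; rw [map_inv, ha τ]

/-- The norm on units, `N : Kˣ →* Fˣ`. -/
def normU : Kˣ →* Fˣ := Units.map (Algebra.norm F : K →* F)

/-- The natural map `Fˣ →* Kˣ`. -/
def incU : Fˣ →* Kˣ := Units.map (algebraMap F K).toMonoidHom

/-- `ε : Fˣ →* J`, with image `ε(F^×) = F^×·(K^×)^p/(K^×)^p`. -/
def epsF : Fˣ →* Jgrp p K := (mkJ p K).comp (incU F K)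

/-- `F^×/(F^×)^p`. -/
abbrev QF := Fˣ ⧸ powSub p F

/-- The map `F^×/(F^×)^p → J` induced by `F ⊆ K`. -/
def epsQ : QF p F →* Jgrp p K :=
  QuotientGroup.map _ _ (incU F K) (by rintro x ⟨y, rfl⟩; exact ⟨incU F K y, by simp [powMonoidHom, map_pow]⟩)

/-- The map `J → F^×/(F^×)^p` induced by the norm. -/
def normJ : Jgrp p K →* QF p F :=
  QuotientGroup.map _ _ (normU F K) (by rintro x ⟨y, rfl⟩; exact ⟨normU F K y, by simp [powMonoidHom, map_pow]⟩)

/-- The cyclic `𝔽_p[G]`-submodule `M_γ` of `J` generated by the class of `γ`: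
the subgroup generated by the `σ`-orbit of `[γ]`. -/
def Mgam (σ : K ≃ₐ[F] K) (γ : Kˣ) : Subgroup (Jgrp p K) :=
  Subgroup.closure {x | ∃ k : ℕ, (galJ p F K (σ ^ k)) (mkJ p K γ) = x}

end KummerSetup

end

open KummerSetup

section Aux

variable {p : ℕ} {F K : Type} [Field F] [Field K] [Algebra F K]

lemma galU_apply (τ : K ≃ₐ[F] K) (u : Kˣ) : (galU F K τ u : K) = τ u := rfl

lemma galU_mul_apply (τ₁ τ₂ : K ≃ₐ[F] K) (u : Kˣ) :
    galU F K (τ₁ * τ₂) u = galU F K τ₁ (galU F K τ₂ u) := by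
  ext; rfl

lemma galU_one_apply (u : Kˣ) : galU F K 1 u = u := by ext; rfl

lemma normU_apply (u : Kˣ) : (normU F K u : F) = Algebra.norm F (u : K) := rfl

lemma incU_apply (u : Fˣ) : (incU F K u : K) = algebraMap F K u := rfl

end Aux

/-- If `ξ_p` is not a norm from `Kˣ`, then the `Gal(K/F)`-fixed subgroup `J_1 = J^G` of
`J = Kˣ/(Kˣ)^p` equals `ε(F^×)`, the image of `F^×` in `Kˣ/(Kˣ)^p`. -/
theorem fixed_eq_epsF_of_xi_not_norm
    (p : ℕ) [Fact p.Prime] (F K : Type) [Field F] [Field K] [Algebra F K]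
    (hchar : (p : F) ≠ 0) (ξ : F) (hξ : IsPrimitiveRoot ξ p)
    (a : F) (α : K) (hα : α ^ p = algebraMap F K a)
    (hadj : Algebra.adjoin F {α} = ⊤)
    [IsGalois F K] (hdeg : Module.finrank F K = p)
    (σ : K ≃ₐ[F] K) (hσ : σ α = algebraMap F K ξ * α)
    (hnotnorm : ¬ ∃ u : Kˣ, Algebra.norm F (u : K) = ξ) :
    fixedJ p F K = (epsF p F K).range := by
  classical
  have hp : p.Prime := Fact.out
  have hp1 : 1 < p := hp.one_lt
  haveI : NeZero p := ⟨hp.ne_zero⟩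
  haveI hfin : FiniteDimensional F K :=
    FiniteDimensional.of_finrank_pos (by rw [hdeg]; exact hp.pos)
  -- α ≠ 0
  have hα0 : α ≠ 0 := by
    intro h
    have hbt : (⊥ : Subalgebra F K) = ⊤ := by
      refine top_le_iff.mp ?_
      rw [← hadj, h]
      exact Algebra.adjoin_le (by simp)
    have := Subalgebra.bot_eq_top_iff_finrank_eq_one.mp hbt
    rw [hdeg] at this
    exact hp.one_lt.ne' this
  have hξ1 : ξ ≠ 1 := hξ.ne_one hp1
  -- σ ≠ 1
  have hσne : σ ≠ 1 := by
    intro h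
    rw [h, AlgEquiv.one_apply] at hσ
    have h1 : algebraMap F K ξ * α = 1 * α := by rw [one_mul, ← hσ]
    have h2 : algebraMap F K ξ = 1 := mul_right_cancel₀ hα0 h1
    exact hξ1 ((algebraMap F K).injective (by rw [h2, map_one]))
  -- the Galois group has order p and is generated by σ
  have hcard : Nat.card (K ≃ₐ[F] K) = p := by
    rw [IsGalois.card_aut_eq_finrank, hdeg]
  have htop : Subgroup.zpowers σ = ⊤ :=
    zpowers_eq_top_of_prime_card hcard hσne
  have horder : orderOf σ = p := by
    rw [← Nat.card_zpowers, htop, Subgroup.card_top, hcard]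
  have hsurj : ∀ τ : K ≃ₐ[F] K, ∃ k : ℕ, σ ^ k = τ := by
    intro τ
    have hmem : τ ∈ Subgroup.zpowers σ := htop ▸ Subgroup.mem_top τ
    exact mem_powers_iff_mem_zpowers.mpr hmem
  apply le_antisymm
  · -- hard direction:  J^G ≤ ε(F^×)
    intro x hx
    obtain ⟨γ, rfl⟩ := QuotientGroup.mk'_surjective (powSub p K) x
    have hxσ : mkJ p K (galU F K σ γ) = mkJ p K γ := hx σ
    rw [mkJ, QuotientGroup.mk'_eq_mk'] at hxσ
    obtain ⟨z, ⟨β₁, rfl⟩, hz⟩ := hxσ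
    -- σ γ = γ * β₀ ^ p
    set β₀ : Kˣ := β₁⁻¹ with hβ₀def
    have hβ : galU F K σ γ = γ * β₀ ^ p := by
      rw [powMonoidHom_apply] at hz
      rw [hβ₀def, inv_pow]
      exact eq_mul_inv_of_mul_eq hz
    -- the norm of β₀ is 1
    have hnormgal : normU F K (galU F K σ γ) = normU F K γ := by
      ext
      exact Algebra.norm_eq_of_algEquiv σ (γ : K)
    have hnp : (normU F K β₀) ^ p = 1 := by
      have h1 := hnormgal
      rw [hβ, map_mul, map_pow] at h1
      exact mul_eq_left.mp h1
    have hn1 : Algebra.norm F (β₀ : K) = 1 := by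
      have hpow : ((normU F K β₀ : Fˣ) : F) ^ p = 1 := by
        rw [← Units.val_pow_eq_pow_val, hnp, Units.val_one]
      obtain ⟨i, hip, hi⟩ := hξ.eq_pow_of_pow_eq_one hpow
      rcases Nat.eq_zero_or_pos i with h0 | h0
      · rw [h0, pow_zero] at hi
        rw [← normU_apply, ← hi]
      · exfalso
        have hcop : Nat.Coprime i p := by
          rw [Nat.coprime_comm]
          exact (Nat.Prime.coprime_iff_not_dvd hp).mpr (Nat.not_dvd_of_pos_of_lt h0 hip)
        obtain ⟨j, -, hj⟩ := Nat.exists_mul_mod_eq_one_of_coprime hcop hp1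
        apply hnotnorm
        refine ⟨β₀ ^ j, ?_⟩
        have hnormpow : Algebra.norm F ((β₀ ^ j : Kˣ) : K) = ((normU F K β₀ : Fˣ) : F) ^ j := by
          rw [← normU_apply, ← Units.val_pow_eq_pow_val, map_pow]
        rw [hnormpow, ← hi, ← pow_mul,
          ← Nat.mod_add_div (i * j) p, pow_add, pow_mul, hξ.pow_eq_one, one_pow, mul_one, hj,
          pow_one]
    -- Hilbert 90: β₀ = σ β' / β'
    set d : ℕ → Kˣ := fun k => ∏ i ∈ Finset.range k, galU F K (σ ^ i) β₀ with hd
    have d_add : ∀ k l, d (k + l) = d k * galU F K (σ ^ k) (d l) := by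
      intro k l
      rw [hd]
      simp only [Finset.prod_range_add, map_prod]
      congr 1
      refine Finset.prod_congr rfl fun i _ => ?_
      rw [← galU_mul_apply, ← pow_add]
    have d_p : d p = 1 := by
      ext
      have hcoe : ((d p : Kˣ) : K) = ∏ i ∈ Finset.range p, (σ ^ i) (β₀ : K) := by
        rw [hd]
        push_cast
        rfl
      rw [hcoe, Units.val_one]
      have hre : ∏ i ∈ Finset.range p, (σ ^ i) (β₀ : K) = ∏ τ : K ≃ₐ[F] K, τ (β₀ : K) := by
        refine Finset.prod_nbij (fun i => σ ^ i) (fun i _ => Finset.mem_univ _) ?_ ?_ ?_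
        · intro i hi j hj hij
          simp only [Finset.coe_range, Set.mem_Iio] at hi hj
          have := pow_eq_pow_iff_modEq.mp hij
          rw [horder] at this
          rwa [Nat.ModEq, Nat.mod_eq_of_lt hi, Nat.mod_eq_of_lt hj] at this
        · intro τ _
          obtain ⟨k, rfl⟩ := hsurj τ
          refine ⟨k % p, by simp [Nat.mod_lt _ hp.pos], ?_⟩
          exact pow_eq_pow_iff_modEq.mpr (by rw [horder]; exact Nat.mod_modEq k p)
        · intro i _; rfl
      rw [hre, ← Algebra.norm_eq_prod_automorphisms, hn1, map_one]
    have d_mod : ∀ q k, d (k + p * q) = d k := by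
      intro q
      induction q with
      | zero => simp
      | succ q ih =>
        intro k
        have : k + p * (q + 1) = (k + p * q) + p := by ring
        rw [this, d_add, d_p, map_one, mul_one, ih]
    have d_eq_of_mod : ∀ k l : ℕ, k % p = l % p → d k = d l := by
      intro k l h
      have hk : d k = d (k % p) := by
        conv_lhs => rw [← Nat.mod_add_div k p]
        rw [d_mod]
      have hl : d l = d (l % p) := by
        conv_lhs => rw [← Nat.mod_add_div l p]
        rw [d_mod]
      rw [hk, hl, h]
    set kk : (K ≃ₐ[F] K) → ℕ := fun τ => (hsurj τ).choose with hkkdef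
    have hkk : ∀ τ, σ ^ kk τ = τ := fun τ => (hsurj τ).choose_spec
    set f : (K ≃ₐ[F] K) → Kˣ := fun τ => d (kk τ) with hfdef
    have hf : groupCohomology.IsMulCocycle₁ f := by
      intro g h
      have h1 : σ ^ kk (g * h) = σ ^ (kk g + kk h) := by
        rw [pow_add, hkk, hkk, hkk]
      have h2 := pow_eq_pow_iff_modEq.mp h1
      rw [horder] at h2
      calc f (g * h) = d (kk g + kk h) := d_eq_of_mod _ _ h2
        _ = d (kk g) * galU F K (σ ^ kk g) (d (kk h)) := d_add _ _
        _ = g • f h * f g := by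
            rw [hkk g, mul_comm, AlgEquiv.smul_units_def]
            rfl
    obtain ⟨β', hβ'⟩ :=
      groupCohomology.isMulCoboundary₁_of_isMulCocycle₁_of_aut_to_units f hf
    have hfσ : f σ = β₀ := by
      have h1 : σ ^ kk σ = σ ^ 1 := by rw [hkk, pow_one]
      have h2 := pow_eq_pow_iff_modEq.mp h1
      rw [horder] at h2
      have h3 : f σ = d 1 := d_eq_of_mod _ _ h2
      rw [h3, hd]
      simp only [Finset.prod_range_one, pow_zero]
      exact galU_one_apply β₀
    have hσβ' : galU F K σ β' = β₀ * β' := by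
      have := hβ' σ
      rw [hfσ, AlgEquiv.smul_units_def, div_eq_iff_eq_mul] at this
      exact this
    -- c := γ / β'^p is fixed by σ, hence by all of Gal(K/F)
    set c : Kˣ := γ * (β' ^ p)⁻¹ with hcdef
    have hc : galU F K σ c = c := by
      rw [hcdef, map_mul, map_inv, map_pow, hβ, hσβ', mul_pow, mul_inv, mul_assoc,
        mul_inv_cancel_left]
    have hcall : ∀ k : ℕ, galU F K (σ ^ k) c = c := by
      intro k
      induction k with
      | zero => rw [pow_zero]; exact galU_one_apply c
      | succ k ih => rw [pow_succ, galU_mul_apply, hc, ih]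
    have hcK : ∀ τ : K ≃ₐ[F] K, τ (c : K) = c := by
      intro τ
      obtain ⟨k, rfl⟩ := hsurj τ
      rw [← galU_apply, hcall k]
    -- hence c comes from F
    have hbot : (c : K) ∈ (⊥ : IntermediateField F K) := by
      have h1 : IntermediateField.fixingSubgroup (⊥ : IntermediateField F K) = ⊤ := by
        rw [Subgroup.eq_top_iff']
        intro g
        rw [IntermediateField.mem_fixingSubgroup_iff]
        intro x hx
        obtain ⟨y, rfl⟩ := IntermediateField.mem_bot.mp hx
        exact g.commutes y
      have h2 := IsGalois.fixedField_fixingSubgroup (⊥ : IntermediateField F K)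
      rw [h1] at h2
      rw [← h2]
      intro g
      exact hcK g
    obtain ⟨u, hu⟩ := IntermediateField.mem_bot.mp hbot
    have hu0 : u ≠ 0 := by
      intro h
      apply c.ne_zero
      rw [← hu, h, map_zero]
    refine ⟨Units.mk0 u hu0, ?_⟩
    have hinc : incU F K (Units.mk0 u hu0) = c := by
      ext
      rw [incU_apply, Units.val_mk0, hu]
    show mkJ p K (incU F K (Units.mk0 u hu0)) = mkJ p K γ
    rw [hinc]
    have hker : mkJ p K (β' ^ p) = 1 := by
      rw [mkJ]
      exact (QuotientGroup.eq_one_iff _).mpr ⟨β', rfl⟩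
    calc mkJ p K c = mkJ p K γ * (mkJ p K (β' ^ p))⁻¹ := by
          rw [hcdef, map_mul, map_inv]
      _ = mkJ p K γ := by rw [hker]; exact mul_one (mkJ p K γ)
  · -- easy direction: ε(F^×) ≤ J^G
    rintro _ ⟨u, rfl⟩ τ
    show galJ p F K τ (mkJ p K (incU F K u)) = mkJ p K (incU F K u)
    have h1 : galU F K τ (incU F K u) = incU F K u := by
      ext
      rw [galU_apply, incU_apply, AlgEquiv.commutes]
    rw [galJ, mkJ, QuotientGroup.map_mk', h1]
    rfl
end

section
/- Let F be a field of characteristic not p containing a primitive p-th root of unity, K = F(a^{1/p}) cyclic of degree p, J = K^×/(K^×)^p, J_1 = J^G, and let ⟨[a]⟩ be the subgroup of F^×/(F^×)^p generated by the class of a. Then the sequence 0 → ⟨[a]⟩ → F^×/(F^×)^p → J_1 → ⟨[a]⟩ is exact, where the first map is inclusion, the second is induced by F^× ⊆ K^×, and the third is induced by the norm N : K^× → F^×. -/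
open KummerSetup

noncomputable section
namespace KummerAux
open KummerSetup Finset

variable {p : ℕ} {F K : Type} [Field F] [Field K] [Algebra F K]

lemma galU_val (τ : K ≃ₐ[F] K) (x : Kˣ) : ((galU F K τ x : Kˣ) : K) = τ (x : K) := rfl

lemma galU_one_apply (x : Kˣ) : galU F K 1 x = x := Units.ext rfl

lemma galU_mul_apply (τ τ' : K ≃ₐ[F] K) (x : Kˣ) :
    galU F K (τ * τ') x = galU F K τ (galU F K τ' x) := Units.ext rfl

/-- `c k = ∏_{i<k} σ^i γ`. -/
def cprod (σ : K ≃ₐ[F] K) (γ : Kˣ) (k : ℕ) : Kˣ :=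
  ∏ i ∈ range k, galU F K (σ ^ i) γ

lemma cprod_zero (σ : K ≃ₐ[F] K) (γ : Kˣ) : cprod σ γ 0 = 1 := prod_range_zero _

lemma cprod_succ (σ : K ≃ₐ[F] K) (γ : Kˣ) (k : ℕ) :
    cprod σ γ (k + 1) = cprod σ γ k * galU F K (σ ^ k) γ := prod_range_succ _ _

lemma cprod_one (σ : K ≃ₐ[F] K) (γ : Kˣ) : cprod σ γ 1 = γ := by
  rw [cprod, prod_range_one, pow_zero, galU_one_apply]

lemma cprod_add (σ : K ≃ₐ[F] K) (γ : Kˣ) (k m : ℕ) :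
    cprod σ γ (k + m) = cprod σ γ k * galU F K (σ ^ k) (cprod σ γ m) := by
  rw [cprod, prod_range_add, cprod, cprod, map_prod]
  congr 1
  refine prod_congr rfl fun i _ => ?_
  rw [← galU_mul_apply, ← pow_add]

lemma telescope {σ : K ≃ₐ[F] K} {β γ : Kˣ} (h : galU F K σ β = β * γ ^ p) (k : ℕ) :
    galU F K (σ ^ k) β = β * (cprod σ γ k) ^ p := by
  induction k with
  | zero => rw [pow_zero, galU_one_apply, cprod_zero, one_pow, mul_one]
  | succ k ih =>
      rw [pow_succ, galU_mul_apply, h, map_mul, map_pow, ih, cprod_succ, mul_pow, mul_assoc]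

lemma galU_cprod (σ : K ≃ₐ[F] K) (γ : Kˣ) (k : ℕ) :
    galU F K σ (cprod σ γ k) = cprod σ γ (k + 1) * γ⁻¹ := by
  have h := cprod_add σ γ 1 k
  rw [cprod_one, pow_one, add_comm] at h
  rw [h, mul_comm γ _, mul_assoc, mul_inv_cancel, mul_one]

section Norm
variable [FiniteDimensional F K] [IsGalois F K]

omit [FiniteDimensional F K] [IsGalois F K] in
lemma incU_val (b : Fˣ) : ((incU F K b : Kˣ) : K) = algebraMap F K (b : F) := rfl
omit [FiniteDimensional F K] [IsGalois F K] in
lemma normU_val (x : Kˣ) : ((normU F K x : Fˣ) : F) = Algebra.norm F (x : K) := rfl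

omit [FiniteDimensional F K] [IsGalois F K] in
lemma galU_incU (τ : K ≃ₐ[F] K) (b : Fˣ) :
    galU F K τ (incU F K b) = incU F K b := Units.ext (τ.commutes (b : F))

omit [IsGalois F K] in
lemma prod_aut_eq {M : Type} [CommMonoid M] {σ : K ≃ₐ[F] K}
    (hord : orderOf σ = p) (hcard : Fintype.card (K ≃ₐ[F] K) = p) (f : (K ≃ₐ[F] K) → M) :
    ∏ τ : K ≃ₐ[F] K, f τ = ∏ k ∈ range p, f (σ ^ k) := by
  have hinj : Function.Injective fun k : Fin p => σ ^ (k : ℕ) := by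
    intro i j hij
    have h2 := pow_eq_pow_iff_modEq.mp hij
    rw [hord] at h2
    have h3 : (i : ℕ) % p = (j : ℕ) % p := h2
    exact Fin.ext (by rw [← Nat.mod_eq_of_lt i.isLt, ← Nat.mod_eq_of_lt j.isLt]; exact h3)
  have hbij : Function.Bijective fun k : Fin p => σ ^ (k : ℕ) :=
    (Fintype.bijective_iff_injective_and_card _).mpr ⟨hinj, by simp [hcard]⟩
  rw [← Fintype.prod_bijective _ hbij (fun k => f (σ ^ (k : ℕ))) f (fun _ => rfl)]
  exact Fin.prod_univ_eq_prod_range (fun k => f (σ ^ k)) p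

lemma incU_normU {σ : K ≃ₐ[F] K}
    (hord : orderOf σ = p) (hcard : Fintype.card (K ≃ₐ[F] K) = p) (x : Kˣ) :
    incU F K (normU F K x) = cprod σ x p := by
  apply Units.ext
  rw [incU_val, normU_val, Algebra.norm_eq_prod_automorphisms,
    prod_aut_eq hord hcard (fun τ => τ (x : K)), cprod]
  exact (map_prod (Units.coeHom K) (fun i => galU F K (σ ^ i) x) (range p)).symm

lemma norm_fixed {σ : K ≃ₐ[F] K}
    (hord : orderOf σ = p) (hcard : Fintype.card (K ≃ₐ[F] K) = p)
    {β γ : Kˣ} (h : galU F K σ β = β * γ ^ p) :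
    incU F K (normU F K β) = (β * ∏ k ∈ range p, cprod σ γ k) ^ p := by
  rw [incU_normU hord hcard β, cprod, prod_congr rfl (fun k _ => telescope h k),
    prod_mul_distrib, prod_const, card_range, prod_pow, ← mul_pow]

omit [FiniteDimensional F K] [IsGalois F K] in
lemma galU_Delta (σ : K ≃ₐ[F] K) (γ : Kˣ) (n : ℕ) :
    galU F K σ (∏ k ∈ range n, cprod σ γ k)
      = (∏ k ∈ range n, cprod σ γ k) * cprod σ γ n * (γ⁻¹) ^ n := by
  rw [map_prod, prod_congr rfl fun k _ => galU_cprod σ γ k, prod_mul_distrib, prod_const,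
    card_range]
  congr 1
  have h1 := prod_range_succ' (fun k => cprod σ γ k) n
  rw [prod_range_succ, cprod_zero, mul_one] at h1
  exact h1.symm

open groupCohomology in
lemma h90cyc {σ : K ≃ₐ[F] K}
    (hord : orderOf σ = p) (hcard : Fintype.card (K ≃ₐ[F] K) = p)
    (hfull : ∀ τ : K ≃ₐ[F] K, ∃ k : ℕ, σ ^ k = τ)
    {γ : Kˣ} (hn : incU F K (normU F K γ) = 1) :
    ∃ ρ : Kˣ, galU F K σ ρ * ρ⁻¹ = γ := by
  have hcp : cprod σ γ p = 1 := by rw [← incU_normU hord hcard γ, hn]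
  have hqp : ∀ q : ℕ, cprod σ γ (q * p) = 1 := by
    intro q
    induction q with
    | zero => rw [Nat.zero_mul, cprod_zero]
    | succ q ih => rw [Nat.succ_mul, cprod_add, ih, hcp, map_one, mul_one]
  have hmod : ∀ k, cprod σ γ k = cprod σ γ (k % p) := by
    intro k
    conv_lhs => rw [← Nat.mod_add_div' k p]
    rw [cprod_add, hqp, map_one, mul_one]
  have heq : ∀ k m : ℕ, σ ^ k = σ ^ m → cprod σ γ k = cprod σ γ m := by
    intro k m h
    have h2 := pow_eq_pow_iff_modEq.mp h
    rw [hord] at h2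
    have h3 : k % p = m % p := h2
    rw [hmod k, hmod m, h3]
  choose idx hidx using hfull
  have hcoc : IsMulCocycle₁ fun τ => cprod σ γ (idx τ) := by
    intro g h
    have h1 : cprod σ γ (idx (g * h)) = cprod σ γ (idx g + idx h) :=
      heq _ _ (by rw [hidx (g * h), pow_add, hidx g, hidx h])
    have h4 : (g • cprod σ γ (idx h) : Kˣ) = galU F K (σ ^ idx g) (cprod σ γ (idx h)) := by
      rw [AlgEquiv.smul_units_def, hidx g]; exact Units.ext rfl
    show cprod σ γ (idx (g * h)) = g • cprod σ γ (idx h) * cprod σ γ (idx g)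
    rw [h1, h4, cprod_add]
    exact mul_comm _ _
  obtain ⟨ρ, hρ⟩ := isMulCoboundary₁_of_isMulCocycle₁_of_aut_to_units _ hcoc
  refine ⟨ρ, ?_⟩
  have h5 : σ • ρ / ρ = cprod σ γ (idx σ) := hρ σ
  rw [heq _ 1 (hidx σ |>.trans (pow_one σ).symm), cprod_one, AlgEquiv.smul_units_def,
    div_eq_mul_inv] at h5
  apply Units.ext
  exact congrArg (fun u : Kˣ => (u : K)) h5

end Norm
end KummerAux
end

open KummerAux Finset groupCohomology

/-- Exactness of `0 → ⟨[a]⟩ → F^×/(F^×)^p → J_1 → ⟨[a]⟩`, where the middle map is induced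
by `F ⊆ K` and the last map by the norm `N : Kˣ → Fˣ`.  Concretely: the kernel of
`F^×/(F^×)^p → J` is the subgroup generated by the class of `a`; the norm maps `J_1` into
`⟨[a]⟩`; and an element of `J_1` has trivial induced norm iff it comes from `F^×/(F^×)^p`. -/
theorem exact_sequence_J1
    (p : ℕ) [Fact p.Prime] (F K : Type) [Field F] [Field K] [Algebra F K]
    (hchar : (p : F) ≠ 0) (ξ : F) (hξ : IsPrimitiveRoot ξ p)
    (a : F) (ua : Fˣ) (hua : (ua : F) = a) (α : K) (hα : α ^ p = algebraMap F K a)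
    (hadj : Algebra.adjoin F {α} = ⊤)
    [IsGalois F K] (hdeg : Module.finrank F K = p)
    (σ : K ≃ₐ[F] K) (hσ : σ α = algebraMap F K ξ * α) :
    (epsQ p F K).ker = Subgroup.closure {QuotientGroup.mk' (powSub p F) ua} ∧
    (∀ x ∈ fixedJ p F K,
      normJ p F K x ∈ Subgroup.closure {QuotientGroup.mk' (powSub p F) ua}) ∧
    (∀ x ∈ fixedJ p F K,
      (normJ p F K x = 1 ↔ x ∈ (epsQ p F K).range)) := by
  classical
  have hp : p.Prime := Fact.out
  have hp0 : p ≠ 0 := hp.ne_zero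
  haveI : FiniteDimensional F K := FiniteDimensional.of_finrank_pos (by rw [hdeg]; exact hp.pos)
  have hinjK : Function.Injective (algebraMap F K) := (algebraMap F K).injective
  have ha0 : a ≠ 0 := hua ▸ ua.ne_zero
  have hα0 : α ≠ 0 := by
    intro h
    apply ha0
    have h2 := hα
    rw [h, zero_pow hp0] at h2
    exact ((map_eq_zero (algebraMap F K)).mp h2.symm)
  set uα : Kˣ := Units.mk0 α hα0 with huα
  have hcard : Fintype.card (K ≃ₐ[F] K) = p := by
    rw [← Nat.card_eq_fintype_card, IsGalois.card_aut_eq_finrank, hdeg]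
  have hξ1 : ξ ≠ 1 := hξ.ne_one hp.one_lt
  have hσne : σ ≠ 1 := by
    intro h
    apply hξ1
    apply hinjK
    rw [map_one]
    have h2 : σ α = α := by rw [h]; rfl
    rw [hσ] at h2
    exact mul_right_cancel₀ hα0 (h2.trans (one_mul α).symm)
  have hord : orderOf σ = p := by
    have hdvd : orderOf σ ∣ p := hcard ▸ orderOf_dvd_card
    rcases hp.eq_one_or_self_of_dvd _ hdvd with h | h
    · exact absurd (orderOf_eq_one_iff.mp h) hσne
    · exact h
  have hfull : ∀ τ : K ≃ₐ[F] K, ∃ k : ℕ, σ ^ k = τ := by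
    have htop : Subgroup.zpowers σ = ⊤ := by
      apply Subgroup.eq_top_of_card_eq
      rw [Nat.card_eq_fintype_card, Nat.card_eq_fintype_card, Fintype.card_zpowers, hord, hcard]
    intro τ
    have hmem : τ ∈ Subgroup.zpowers σ := htop ▸ Subgroup.mem_top τ
    exact (Submonoid.mem_powers_iff _ _).mp (mem_powers_iff_mem_zpowers.mpr hmem)
  have hfixall : ∀ z : K, σ z = z → ∀ τ : K ≃ₐ[F] K, τ z = z := by
    intro z hz τ
    obtain ⟨k, rfl⟩ := hfull τ
    induction k with
    | zero => simp
    | succ k ih => rw [pow_succ]; simp only [AlgEquiv.mul_apply, hz, ih]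
  have hfix : ∀ z : K, σ z = z → ∃ w : F, algebraMap F K w = z := by
    intro z hz
    have hmem : z ∈ IntermediateField.fixedField
        (IntermediateField.fixingSubgroup (⊥ : IntermediateField F K)) :=
      fun g => hfixall z hz g
    rw [IsGalois.fixedField_fixingSubgroup] at hmem
    exact IntermediateField.mem_bot.mp hmem
  haveI : NeZero p := ⟨hp0⟩
  have hroot : ∀ z : K, z ^ p = 1 → ∃ j : ℕ, algebraMap F K (ξ ^ j) = z := by
    intro z hz
    have hξK : IsPrimitiveRoot (algebraMap F K ξ) p := hξ.map_of_injective hinjK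
    obtain ⟨j, _, hjz⟩ := hξK.eq_pow_of_pow_eq_one hz
    exact ⟨j, by rw [map_pow, hjz]⟩
  have hξ0 : ξ ≠ 0 := by
    intro h
    have h2 := hξ.pow_eq_one
    rw [h, zero_pow hp0] at h2
    exact zero_ne_one h2
  set uξ : Fˣ := Units.mk0 ξ hξ0 with huξ
  -- p-th powers are in the subgroups
  have hpowK : ∀ y : Kˣ, y ^ p ∈ powSub p K := fun y => ⟨y, rfl⟩
  have hpowF : ∀ y : Fˣ, y ^ p ∈ powSub p F := fun y => ⟨y, rfl⟩
  have hmemK : ∀ x : Kˣ, x ∈ powSub p K → ∃ y : Kˣ, y ^ p = x := by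
    rintro x ⟨y, rfl⟩; exact ⟨y, rfl⟩
  have hmemF : ∀ x : Fˣ, x ∈ powSub p F → ∃ y : Fˣ, y ^ p = x := by
    rintro x ⟨y, rfl⟩; exact ⟨y, rfl⟩
  -- Part 1: the kernel of epsQ
  have hker : (epsQ p F K).ker = Subgroup.closure {QuotientGroup.mk' (powSub p F) ua} := by
    apply le_antisymm
    · intro x hx
      obtain ⟨b, rfl⟩ := QuotientGroup.mk'_surjective (powSub p F) x
      rw [MonoidHom.mem_ker] at hx
      have hx2 : QuotientGroup.mk' (powSub p K) (incU F K b) = 1 := hx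
      have hx3 : incU F K b ∈ powSub p K := (QuotientGroup.eq_one_iff _).mp hx2
      obtain ⟨y, hy⟩ := hmemK _ hx3
      have hyp : ((y : K)) ^ p = algebraMap F K (b : F) := congrArg (Units.val) hy
      have hb0 : algebraMap F K (b : F) ≠ 0 := by
        rw [map_ne_zero]; exact b.ne_zero
      have hy0 : (y : K) ≠ 0 := y.ne_zero
      have hz : (σ (y : K) * ((y : K))⁻¹) ^ p = 1 := by
        rw [mul_pow, ← map_pow, hyp, inv_pow, hyp, AlgEquiv.commutes,
          mul_inv_cancel₀ hb0]
      obtain ⟨j, hj⟩ := hroot _ hz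
      have hξj0 : algebraMap F K (ξ ^ j) ≠ 0 := by
        rw [map_ne_zero]; exact pow_ne_zero _ hξ0
      have hαj0 : α ^ j ≠ 0 := pow_ne_zero _ hα0
      have hσy : σ (y : K) = algebraMap F K (ξ ^ j) * (y : K) := by
        rw [hj]; field_simp
      have hσα : σ (α ^ j) = algebraMap F K (ξ ^ j) * α ^ j := by
        rw [map_pow, hσ, mul_pow, ← map_pow]
      have hfixz : σ ((y : K) * (α ^ j)⁻¹) = (y : K) * (α ^ j)⁻¹ := by
        rw [map_mul, map_inv₀, hσy, hσα, mul_inv, mul_comm (algebraMap F K (ξ ^ j)) (y : K),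
          mul_assoc, ← mul_assoc (algebraMap F K (ξ ^ j)), mul_inv_cancel₀ hξj0, one_mul]
      obtain ⟨w, hw⟩ := hfix _ hfixz
      have hw0 : w ≠ 0 := by
        intro h
        rw [h, map_zero] at hw
        exact (mul_ne_zero hy0 (inv_ne_zero hαj0)) hw.symm
      have hy2 : (y : K) = algebraMap F K w * α ^ j := by
        rw [hw]; field_simp
      have hbeq : (b : F) = w ^ p * a ^ j := by
        apply hinjK
        rw [← hyp, hy2, mul_pow, ← map_pow, ← pow_mul, mul_comm j p, pow_mul, hα,
          ← map_pow _ a j, map_mul, map_pow]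
      set uw : Fˣ := Units.mk0 w hw0 with huw
      have hbu : b = uw ^ p * ua ^ j := by
        apply Units.ext
        rw [hbeq]
        simp [huw, hua]
      rw [hbu, map_mul, map_pow, map_pow]
      have h1 : (QuotientGroup.mk' (powSub p F)) uw ^ p = 1 := by
        rw [← map_pow]
        exact (QuotientGroup.eq_one_iff _).mpr (hpowF uw)
      rw [h1]
      exact Subgroup.mem_closure_singleton.mpr
        ⟨(j : ℤ), (zpow_natCast _ j).trans (one_mul (_ : QF p F)).symm⟩
    · rw [Subgroup.closure_le, Set.singleton_subset_iff, SetLike.mem_coe, MonoidHom.mem_ker]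
      have hua2 : incU F K ua = uα ^ p := by
        apply Units.ext
        show algebraMap F K (ua : F) = ((uα ^ p : Kˣ) : K)
        rw [hua, Units.val_pow_eq_pow_val, huα, Units.val_mk0, hα]
      show QuotientGroup.mk' (powSub p K) (incU F K ua) = 1
      rw [hua2]
      exact (QuotientGroup.eq_one_iff _).mpr (hpowK uα)
  -- for a fixed class, get the twisting element γ
  have hfixedγ : ∀ β : Kˣ, (QuotientGroup.mk' (powSub p K) β) ∈ fixedJ p F K →
      ∃ γ : Kˣ, galU F K σ β = β * γ ^ p := by
    intro β hβ
    have h1 : ∀ τ : K ≃ₐ[F] K, galJ p F K τ (QuotientGroup.mk' (powSub p K) β)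
        = QuotientGroup.mk' (powSub p K) β := hβ
    have h2 : QuotientGroup.mk' (powSub p K) (galU F K σ β)
        = QuotientGroup.mk' (powSub p K) β := h1 σ
    have h3 : (galU F K σ β)⁻¹ * β ∈ powSub p K := QuotientGroup.eq.mp h2
    obtain ⟨γ', hγ'⟩ := hmemK _ h3
    refine ⟨γ'⁻¹, ?_⟩
    rw [inv_pow, hγ', mul_inv_rev, inv_inv, ← mul_assoc, mul_inv_cancel, one_mul]
  -- Part 2
  have hpart2 : ∀ x ∈ fixedJ p F K,
      normJ p F K x ∈ Subgroup.closure {QuotientGroup.mk' (powSub p F) ua} := by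
    intro x hx
    rw [← hker, MonoidHom.mem_ker]
    obtain ⟨β, rfl⟩ := QuotientGroup.mk'_surjective (powSub p K) x
    obtain ⟨γ, hγ⟩ := hfixedγ β hx
    show QuotientGroup.mk' (powSub p K) (incU F K (normU F K β)) = 1
    rw [norm_fixed hord hcard hγ]
    exact (QuotientGroup.eq_one_iff _).mpr (hpowK _)
  refine ⟨hker, hpart2, ?_⟩
  -- Part 3
  intro x hx
  constructor
  · intro hnx
    obtain ⟨β, rfl⟩ := QuotientGroup.mk'_surjective (powSub p K) x
    obtain ⟨γ, hγ⟩ := hfixedγ β hx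
    have hn2 : QuotientGroup.mk' (powSub p F) (normU F K β) = 1 := hnx
    obtain ⟨c, hc⟩ := hmemF _ ((QuotientGroup.eq_one_iff _).mp hn2)
    set lam : Kˣ := β * (incU F K c)⁻¹ with hlam
    have hσlam : galU F K σ lam = lam * γ ^ p := by
      rw [hlam, map_mul, map_inv, galU_incU, hγ, mul_assoc, mul_comm (γ ^ p), ← mul_assoc]
    have hNc : normU F K (incU F K c) = c ^ p := by
      apply Units.ext
      show Algebra.norm F (algebraMap F K (c : F)) = ((c ^ p : Fˣ) : F)
      rw [Algebra.norm_algebraMap, hdeg, Units.val_pow_eq_pow_val]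
    have hNlam : incU F K (normU F K lam) = 1 := by
      rw [hlam, map_mul, map_inv, map_mul, map_inv, hNc, ← hc, mul_inv_cancel]
    set Δ : Kˣ := ∏ k ∈ Finset.range p, cprod σ γ k with hΔ
    have hlamΔ : (lam * Δ) ^ p = 1 := by
      have h2 := norm_fixed hord hcard hσlam
      rw [hNlam] at h2
      exact h2.symm
    have hval : ((lam * Δ : Kˣ) : K) ^ p = 1 := by
      have := congrArg (Units.val) hlamΔ
      rwa [Units.val_pow_eq_pow_val, Units.val_one] at this
    obtain ⟨j, hj⟩ := hroot _ hval
    set uζ : Fˣ := uξ ^ j with huζ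
    have hlamΔu : lam * Δ = incU F K uζ := by
      apply Units.ext
      show ((lam * Δ : Kˣ) : K) = algebraMap F K ((uζ : Fˣ) : F)
      rw [huζ, Units.val_pow_eq_pow_val, huξ, Units.val_mk0, ← hj]
    have hlameq : lam = incU F K uζ * Δ⁻¹ := eq_mul_inv_iff_mul_eq.mpr hlamΔu
    have hσΔ : galU F K σ Δ = Δ * cprod σ γ p * (γ⁻¹) ^ p := galU_Delta σ γ p
    -- deduce cprod σ γ p = 1
    have hclean : cprod σ γ p = 1 := by
      have e1 := hσlam
      rw [hlameq, map_mul, map_inv, galU_incU, hσΔ] at e1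
      -- e1 : incU uζ * (Δ * cprod p * (γ⁻¹)^p)⁻¹ = incU uζ * Δ⁻¹ * γ^p
      rw [inv_pow] at e1
      set A := incU F K uζ
      set B := Δ
      set C := cprod σ γ p
      set D := γ ^ p
      have s1 : A * (B * C * D⁻¹)⁻¹ = A * (B⁻¹ * D) := by
        rw [e1, mul_assoc]
      have s2 : (B * C * D⁻¹)⁻¹ = B⁻¹ * D := mul_left_cancel s1
      have s3 : B * C * D⁻¹ = D⁻¹ * B := by
        rw [← inv_inv (B * C * D⁻¹), s2, mul_inv_rev, inv_inv]
      have s4 : B * (C * D⁻¹) = B * D⁻¹ := by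
        rw [← mul_assoc, s3, mul_comm D⁻¹ B]
      have s5 : C * D⁻¹ = D⁻¹ := mul_left_cancel s4
      have s6 : C * D⁻¹ = 1 * D⁻¹ := by rw [s5, one_mul]
      exact mul_right_cancel s6
    have hnγ : incU F K (normU F K γ) = 1 := by
      rw [incU_normU hord hcard γ]
      exact hclean
    obtain ⟨ρ, hρ⟩ := h90cyc hord hcard hfull hnγ
    have hρ2 : galU F K σ ρ = γ * ρ := by
      rw [← hρ, inv_mul_cancel_right]
    have hσE : galU F K σ (Δ * ρ ^ p) = Δ * ρ ^ p := by
      rw [map_mul, map_pow, hσΔ, hclean, mul_one, hρ2, mul_pow, inv_pow, mul_assoc,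
        inv_mul_cancel_left]
    have hσEv : σ ((Δ * ρ ^ p : Kˣ) : K) = ((Δ * ρ ^ p : Kˣ) : K) :=
      congrArg (Units.val) hσE
    obtain ⟨w, hw⟩ := hfix _ hσEv
    have hw0 : w ≠ 0 := by
      intro h
      rw [h, map_zero] at hw
      exact Units.ne_zero _ hw.symm
    set uw : Fˣ := Units.mk0 w hw0 with huw
    have hE : incU F K uw = Δ * ρ ^ p := Units.ext hw
    have hΔeq : Δ = incU F K uw * (ρ ^ p)⁻¹ := eq_mul_inv_iff_mul_eq.mpr hE.symm
    have hβ2 : β = lam * incU F K c := by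
      rw [hlam, inv_mul_cancel_right]
    have hβfin : β = incU F K (uζ * uw⁻¹ * c) * ρ ^ p := by
      rw [hβ2, hlameq, hΔeq, mul_inv_rev, inv_inv, map_mul, map_mul, map_inv]
      simp only [mul_assoc, mul_left_comm, mul_comm]
    refine ⟨QuotientGroup.mk' (powSub p F) (uζ * uw⁻¹ * c), ?_⟩
    show QuotientGroup.mk' (powSub p K) (incU F K (uζ * uw⁻¹ * c))
        = QuotientGroup.mk' (powSub p K) β
    rw [hβfin]
    exact (QuotientGroup.mk_mul_of_mem _ (hpowK ρ)).symm
  · rintro ⟨q, rfl⟩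
    obtain ⟨b, rfl⟩ := QuotientGroup.mk'_surjective (powSub p F) q
    have hNb : normU F K (incU F K b) = b ^ p := by
      apply Units.ext
      show Algebra.norm F (algebraMap F K (b : F)) = ((b ^ p : Fˣ) : F)
      rw [Algebra.norm_algebraMap, hdeg, Units.val_pow_eq_pow_val]
    show QuotientGroup.mk' (powSub p F) (normU F K (incU F K b)) = 1
    rw [hNb]
    exact (QuotientGroup.eq_one_iff _).mpr (hpowF b)
end

section
/- With F, K = F(a^{1/p}), J, J_1 as in Kummer theory for a degree-p cyclic extension with ξ_p ∈ F: the map J_1 → ⟨[a]⟩ ⊆ F^×/(F^×)^p induced by the norm N : K^× → F^× is surjective if and only if ξ_p ∈ N(K^×). -/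
open KummerSetup

/-- The map `J_1 → ⟨[a]⟩ ⊆ F^×/(F^×)^p` induced by the norm is surjective if and only if
`ξ_p` is a norm from `Kˣ`. -/
theorem norm_J1_surjective_iff
    (p : ℕ) [Fact p.Prime] (F K : Type) [Field F] [Field K] [Algebra F K]
    (hchar : (p : F) ≠ 0) (ξ : F) (hξ : IsPrimitiveRoot ξ p)
    (a : F) (ua : Fˣ) (hua : (ua : F) = a) (α : K) (hα : α ^ p = algebraMap F K a)
    (hadj : Algebra.adjoin F {α} = ⊤)
    [IsGalois F K] (hdeg : Module.finrank F K = p)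
    (σ : K ≃ₐ[F] K) (hσ : σ α = algebraMap F K ξ * α) :
    (∀ y ∈ Subgroup.closure {QuotientGroup.mk' (powSub p F) ua},
        ∃ x ∈ fixedJ p F K, normJ p F K x = y) ↔
      ∃ u : Kˣ, Algebra.norm F (u : K) = ξ := by
  classical
  have hp : p.Prime := Fact.out
  haveI : NeZero p := ⟨hp.ne_zero⟩
  have hp0 : 0 < p := hp.pos
  haveI hFD : FiniteDimensional F K := FiniteDimensional.of_finrank_pos (hdeg ▸ hp0)
  have hinj : Function.Injective (algebraMap F K) := (algebraMap F K).injective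
  have ha0 : a ≠ 0 := hua ▸ ua.ne_zero
  have hα0 : α ≠ 0 := by
    intro h
    apply ha0
    apply hinj
    rw [← hα, h, zero_pow hp.ne_zero, map_zero]
  have hξ0 : ξ ≠ 0 := hξ.ne_zero hp.ne_zero
  have hξ1 : ξ ≠ 1 := hξ.ne_one hp.one_lt
  set uα : Kˣ := Units.mk0 α hα0 with huα
  set uξ : Fˣ := Units.mk0 ξ hξ0 with huξ
  -- coercion helpers
  have cval : ∀ (τ : K ≃ₐ[F] K) (x : Kˣ), ((galU F K τ x : Kˣ) : K) = τ (x : K) := fun _ _ => rfl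
  have nval : ∀ (x : Kˣ), ((normU F K x : Fˣ) : F) = Algebra.norm F (x : K) := fun _ => rfl
  have ival : ∀ (y : Fˣ), ((incU F K y : Kˣ) : K) = algebraMap F K (y : F) := fun _ => rfl
  have galU_one : ∀ x : Kˣ, galU F K 1 x = x := fun _ => rfl
  have galU_mul : ∀ (τ₁ τ₂ : K ≃ₐ[F] K) (x : Kˣ),
      galU F K τ₁ (galU F K τ₂ x) = galU F K (τ₁ * τ₂) x := fun _ _ _ => rfl
  have galU_inc : ∀ (τ : K ≃ₐ[F] K) (y : Fˣ), galU F K τ (incU F K y) = incU F K y := by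
    intro τ y; ext; rw [cval, ival, AlgEquiv.commutes]
  -- Galois group facts
  have hcard : Fintype.card (K ≃ₐ[F] K) = p := by
    rw [← Nat.card_eq_fintype_card, IsGalois.card_aut_eq_finrank, hdeg]
  have hξK1 : algebraMap F K ξ ≠ 1 := fun h => hξ1 (hinj (by simpa using h))
  have hσ1 : σ ≠ 1 := by
    intro h
    apply hξK1
    have h1 : algebraMap F K ξ * α = 1 * α := by
      rw [one_mul, ← hσ, h, AlgEquiv.one_apply]
    exact mul_right_cancel₀ hα0 h1
  have horder : orderOf σ = p := by
    have hdvd : orderOf σ ∣ p := hcard ▸ orderOf_dvd_card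
    rcases hp.eq_one_or_self_of_dvd _ hdvd with h | h
    · exact absurd (orderOf_eq_one_iff.mp h) hσ1
    · exact h
  have htop : Subgroup.zpowers σ = ⊤ := by
    apply Subgroup.eq_top_of_card_eq
    rw [Nat.card_zpowers, horder, Nat.card_eq_fintype_card, hcard]
  have hsurjσ : ∀ τ : K ≃ₐ[F] K, ∃ k, k < p ∧ σ ^ k = τ := by
    intro τ
    obtain ⟨n, hn⟩ := (htop ▸ Subgroup.mem_top τ : τ ∈ Subgroup.zpowers σ)
    have hppos : (0 : ℤ) < (p : ℤ) := by exact_mod_cast hp0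
    refine ⟨(n % (p : ℤ)).toNat, ?_, ?_⟩
    · have := Int.emod_lt_of_pos n hppos
      omega
    · rw [← hn, ← zpow_natCast, Int.toNat_of_nonneg (Int.emod_nonneg n (by exact_mod_cast hp.ne_zero))]
      rw [← horder, zpow_mod_orderOf]
  -- norm as a product over powers of σ
  have hnorm : ∀ x : K, algebraMap F K (Algebra.norm F x) = ∏ i ∈ Finset.range p, (σ ^ i) x := by
    intro x
    rw [Algebra.norm_eq_prod_automorphisms]
    symm
    apply Finset.prod_bij (fun k _ => σ ^ k)
    · intro k _; exact Finset.mem_univ _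
    · intro i hi j hj hij
      exact pow_injOn_Iio_orderOf (by simpa [horder] using Finset.mem_range.mp hi)
        (by simpa [horder] using Finset.mem_range.mp hj) hij
    · intro τ _
      obtain ⟨k, hk, hkτ⟩ := hsurjσ τ
      exact ⟨k, Finset.mem_range.mpr hk, hkτ⟩
    · intro k _; rfl
  have hninv : ∀ (τ : K ≃ₐ[F] K) (x : K), Algebra.norm F (τ x) = Algebra.norm F x := by
    intro τ x
    apply hinj
    rw [Algebra.norm_eq_prod_automorphisms, Algebra.norm_eq_prod_automorphisms]
    exact Fintype.prod_equiv (Equiv.mulRight τ) _ _ (fun η => rfl)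
  have hninvU : ∀ (τ : K ≃ₐ[F] K) (x : Kˣ), normU F K (galU F K τ x) = normU F K x := by
    intro τ x; ext; rw [nval, nval, cval, hninv]
  have hnormU : ∀ x : Kˣ, incU F K (normU F K x) = ∏ i ∈ Finset.range p, galU F K (σ ^ i) x := by
    intro x
    ext
    rw [ival, nval, hnorm]
    have : ((∏ i ∈ Finset.range p, galU F K (σ ^ i) x : Kˣ) : K)
        = ∏ i ∈ Finset.range p, ((galU F K (σ ^ i) x : Kˣ) : K) := map_prod (Units.coeHom K) _ _
    rw [this]
    exact Finset.prod_congr rfl fun i _ => (cval _ _).symm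
  -- quotient helpers
  have hmkK : ∀ x y : Kˣ, mkJ p K x = mkJ p K y ↔ ∃ z : Kˣ, x * z ^ p = y := by
    intro x y
    rw [show mkJ p K = QuotientGroup.mk' (powSub p K) from rfl, QuotientGroup.mk'_eq_mk']
    constructor
    · rintro ⟨z, ⟨w, rfl⟩, h⟩
      exact ⟨w, h⟩
    · rintro ⟨w, h⟩
      exact ⟨w ^ p, ⟨w, rfl⟩, h⟩
  have hmkF : ∀ x y : Fˣ, QuotientGroup.mk' (powSub p F) x = QuotientGroup.mk' (powSub p F) y
      ↔ ∃ z : Fˣ, x * z ^ p = y := by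
    intro x y
    rw [QuotientGroup.mk'_eq_mk']
    constructor
    · rintro ⟨z, ⟨w, rfl⟩, h⟩
      exact ⟨w, h⟩
    · rintro ⟨w, h⟩
      exact ⟨w ^ p, ⟨w, rfl⟩, h⟩
  have hgalJmk : ∀ (τ : K ≃ₐ[F] K) (x : Kˣ), galJ p F K τ (mkJ p K x) = mkJ p K (galU F K τ x) :=
    fun _ _ => rfl
  have hnormJmk : ∀ x : Kˣ, normJ p F K (mkJ p K x) = QuotientGroup.mk' (powSub p F) (normU F K x) :=
    fun _ => rfl
  have hmk_mul_pow : ∀ x v : Kˣ, mkJ p K (x * v ^ p) = mkJ p K x :=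
    fun x v => ((hmkK x (x * v ^ p)).mpr ⟨v, rfl⟩).symm
  -- fixedJ membership criterion
  have hfix_of : ∀ γ : Kˣ, (∃ z : Kˣ, galU F K σ γ = γ * z ^ p) → mkJ p K γ ∈ fixedJ p F K := by
    rintro γ ⟨z, hz⟩ τ
    obtain ⟨k, -, rfl⟩ := hsurjσ τ
    induction k with
    | zero => rw [pow_zero, hgalJmk, galU_one]
    | succ n ih =>
      rw [hgalJmk] at ih ⊢
      have h2 : galU F K (σ ^ (n+1)) γ = galU F K (σ ^ n) γ * (galU F K (σ ^ n) z) ^ p := by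
        rw [pow_succ, ← galU_mul, hz, map_mul, map_pow]
      calc mkJ p K (galU F K (σ ^ (n+1)) γ)
          = mkJ p K (galU F K (σ ^ n) γ * (galU F K (σ ^ n) z) ^ p) := congrArg _ h2
        _ = mkJ p K (galU F K (σ ^ n) γ) := hmk_mul_pow _ _
        _ = mkJ p K γ := ih
  -- σ acts on α
  have hσuα : galU F K σ uα = incU F K uξ * uα := by
    ext
    rw [Units.val_mul, cval, ival]
    show σ α = algebraMap F K ξ * α
    exact hσ
  have hinc_ua : incU F K ua = uα ^ p := by
    ext
    rw [ival, hua, ← hα, Units.val_pow_eq_pow_val]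
    rfl
  -- key recursion for partial products
  have hMrec : ∀ (v : Kˣ) (i : ℕ),
      galU F K σ (∏ j ∈ Finset.range i, galU F K (σ ^ j) v) * v
        = ∏ j ∈ Finset.range (i + 1), galU F K (σ ^ j) v := by
    intro v i
    rw [map_prod, Finset.prod_range_succ']
    congr 1
    exact Finset.prod_congr rfl fun j _ => by rw [galU_mul, ← pow_succ']
  have hMσ : ∀ (v : Kˣ) (i : ℕ),
      galU F K σ (∏ j ∈ Finset.range i, galU F K (σ ^ j) v)
        = (∏ j ∈ Finset.range (i + 1), galU F K (σ ^ j) v) * v⁻¹ := by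
    intro v i
    rw [← hMrec v i, mul_inv_cancel_right]
  have hMσprod : ∀ v : Kˣ,
      galU F K σ (∏ i ∈ Finset.range p, ∏ j ∈ Finset.range i, galU F K (σ ^ j) v)
        = (∏ i ∈ Finset.range p, ∏ j ∈ Finset.range i, galU F K (σ ^ j) v)
            * incU F K (normU F K v) * (v⁻¹) ^ p := by
    intro v
    rw [map_prod]
    rw [Finset.prod_congr rfl fun i _ => hMσ v i, Finset.prod_mul_distrib,
      Finset.prod_const, Finset.card_range]
    congr 1
    have h1 := Finset.prod_range_succ' (fun i => ∏ j ∈ Finset.range i, galU F K (σ ^ j) v) p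
    rw [Finset.prod_range_succ] at h1
    rw [Finset.range_zero, Finset.prod_empty, mul_one] at h1
    rw [← h1, hnormU]
  -- N(α) = ξ^s * a
  have hNuα : normU F K uα = uξ ^ (∑ i ∈ Finset.range p, i) * ua := by
    ext
    rw [nval]
    show Algebra.norm F α = _
    apply hinj
    rw [hnorm]
    have h2 : ∀ i : ℕ, (σ ^ i) α = (algebraMap F K ξ) ^ i * α := by
      intro i
      induction i with
      | zero => simp
      | succ n ih =>
        rw [pow_succ σ, AlgEquiv.mul_apply, hσ, map_mul, AlgEquiv.commutes, ih, pow_succ]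
        ring
    rw [Finset.prod_congr rfl (fun i _ => h2 i), Finset.prod_mul_distrib, Finset.prod_const,
      Finset.card_range, Finset.prod_pow_eq_pow_sum, hα, Units.val_mul,
      Units.val_pow_eq_pow_val, huξ, Units.val_mk0, hua, map_mul, map_pow]
  constructor
  · -- surjectivity implies ξ is a norm
    intro hs
    obtain ⟨x, hxfix, hxnorm⟩ := hs (QuotientGroup.mk' (powSub p F) ua)
      (Subgroup.mem_closure_singleton.mpr ⟨1, zpow_one _⟩)
    obtain ⟨γ, rfl⟩ := QuotientGroup.mk'_surjective (powSub p K) x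
    have hγfix : galJ p F K σ (mkJ p K γ) = mkJ p K γ := hxfix σ
    rw [hgalJmk] at hγfix
    obtain ⟨z, hz⟩ := (hmkK _ _).mp hγfix
    obtain ⟨f, hf⟩ := (hmkF _ _).mp hxnorm
    obtain ⟨k, hσγ⟩ : ∃ k : Kˣ, galU F K σ γ = γ * k ^ p :=
      ⟨z⁻¹, by rw [inv_pow]; exact eq_mul_inv_of_mul_eq hz⟩
    -- partial products
    have hMγ : ∀ i : ℕ,
        galU F K (σ ^ i) γ = γ * (∏ j ∈ Finset.range i, galU F K (σ ^ j) k) ^ p := by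
      intro i
      induction i with
      | zero =>
        rw [pow_zero, galU_one, Finset.range_zero, Finset.prod_empty, one_pow, mul_one]
      | succ n ih =>
        rw [pow_succ, ← galU_mul, hσγ, map_mul, map_pow, ih, Finset.prod_range_succ, mul_pow,
          mul_assoc]
    have hNγC : incU F K (normU F K γ)
        = γ ^ p * (∏ i ∈ Finset.range p, ∏ j ∈ Finset.range i, galU F K (σ ^ j) k) ^ p := by
      rw [hnormU, Finset.prod_congr rfl fun i _ => hMγ i, Finset.prod_mul_distrib,
        Finset.prod_const, Finset.card_range, Finset.prod_pow]
    -- the ratio is a p-th root of unity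
    have hrp : (γ * (∏ i ∈ Finset.range p, ∏ j ∈ Finset.range i, galU F K (σ ^ j) k)
        * uα⁻¹ * incU F K f) ^ p = 1 := by
      rw [mul_pow, mul_pow, mul_pow, inv_pow, ← hinc_ua, ← hNγC, ← map_pow, mul_right_comm,
        ← map_mul, hf, mul_inv_cancel]
    have hξK : IsPrimitiveRoot (algebraMap F K ξ) p := hξ.map_of_injective hinj
    have hrval : (((γ * (∏ i ∈ Finset.range p, ∏ j ∈ Finset.range i, galU F K (σ ^ j) k)
        * uα⁻¹ * incU F K f : Kˣ)) : K) ^ p = 1 := by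
      rw [← Units.val_pow_eq_pow_val, hrp, Units.val_one]
    obtain ⟨t, -, ht⟩ := hξK.eq_pow_of_pow_eq_one hrval
    have hwit : γ * (∏ i ∈ Finset.range p, ∏ j ∈ Finset.range i, galU F K (σ ^ j) k)
        * uα⁻¹ * incU F K f = (incU F K uξ) ^ t := by
      refine Units.ext ?_
      rw [← ht, Units.val_pow_eq_pow_val, ival, huξ, Units.val_mk0]
    have h5 : γ * (∏ i ∈ Finset.range p, ∏ j ∈ Finset.range i, galU F K (σ ^ j) k) * uα⁻¹
        = (incU F K uξ) ^ t * (incU F K f)⁻¹ :=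
      eq_mul_inv_iff_mul_eq.mpr hwit
    have hγC : γ * (∏ i ∈ Finset.range p, ∏ j ∈ Finset.range i, galU F K (σ ^ j) k)
        = (incU F K uξ) ^ t * (incU F K f)⁻¹ * uα :=
      mul_inv_eq_iff_eq_mul.mp h5
    have h6 : galU F K σ (γ * (∏ i ∈ Finset.range p, ∏ j ∈ Finset.range i, galU F K (σ ^ j) k))
        = γ * (∏ i ∈ Finset.range p, ∏ j ∈ Finset.range i, galU F K (σ ^ j) k)
            * incU F K (normU F K k) := by
      calc galU F K σ (γ * (∏ i ∈ Finset.range p, ∏ j ∈ Finset.range i, galU F K (σ ^ j) k))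
          = (γ * k ^ p) * ((∏ i ∈ Finset.range p, ∏ j ∈ Finset.range i, galU F K (σ ^ j) k)
              * incU F K (normU F K k) * (k⁻¹) ^ p) := by
            rw [map_mul, hσγ, hMσprod k]
        _ = (γ * ((∏ i ∈ Finset.range p, ∏ j ∈ Finset.range i, galU F K (σ ^ j) k)
              * incU F K (normU F K k))) * (k ^ p * (k ^ p)⁻¹) := by
            rw [inv_pow, mul_mul_mul_comm]
        _ = γ * (∏ i ∈ Finset.range p, ∏ j ∈ Finset.range i, galU F K (σ ^ j) k)
              * incU F K (normU F K k) := by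
            rw [mul_inv_cancel, mul_one, mul_assoc]
    have h7 : galU F K σ (γ * (∏ i ∈ Finset.range p, ∏ j ∈ Finset.range i, galU F K (σ ^ j) k))
        = (incU F K uξ) ^ t * (incU F K f)⁻¹ * (incU F K uξ * uα) := by
      rw [hγC, map_mul, map_mul, map_pow, galU_inc, map_inv, galU_inc, hσuα]
    have h8 : γ * (∏ i ∈ Finset.range p, ∏ j ∈ Finset.range i, galU F K (σ ^ j) k)
        * incU F K (normU F K k)
        = γ * (∏ i ∈ Finset.range p, ∏ j ∈ Finset.range i, galU F K (σ ^ j) k)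
            * incU F K uξ := by
      calc γ * (∏ i ∈ Finset.range p, ∏ j ∈ Finset.range i, galU F K (σ ^ j) k)
              * incU F K (normU F K k)
          = galU F K σ (γ * (∏ i ∈ Finset.range p, ∏ j ∈ Finset.range i, galU F K (σ ^ j) k)) :=
            h6.symm
        _ = (incU F K uξ) ^ t * (incU F K f)⁻¹ * (incU F K uξ * uα) := h7
        _ = ((incU F K uξ) ^ t * (incU F K f)⁻¹ * uα) * incU F K uξ := by
            rw [← mul_assoc, mul_right_comm]
        _ = γ * (∏ i ∈ Finset.range p, ∏ j ∈ Finset.range i, galU F K (σ ^ j) k)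
              * incU F K uξ := by rw [← hγC]
    have h9 : incU F K (normU F K k) = incU F K uξ := mul_left_cancel h8
    have h10 : normU F K k = uξ := Units.map_injective hinj h9
    exact ⟨k, congrArg Units.val h10⟩
  · -- ξ a norm implies surjectivity
    rintro ⟨u, hu⟩ y hy
    have hNu : normU F K u = uξ := Units.ext hu
    -- the element w and γ
    have hσγ : galU F K σ (uα⁻¹ * (∏ i ∈ Finset.range p, ∏ j ∈ Finset.range i, galU F K (σ ^ j) u))
        = (uα⁻¹ * (∏ i ∈ Finset.range p, ∏ j ∈ Finset.range i, galU F K (σ ^ j) u))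
            * (u⁻¹) ^ p := by
      calc galU F K σ (uα⁻¹ * (∏ i ∈ Finset.range p, ∏ j ∈ Finset.range i, galU F K (σ ^ j) u))
          = (incU F K uξ * uα)⁻¹
              * ((∏ i ∈ Finset.range p, ∏ j ∈ Finset.range i, galU F K (σ ^ j) u)
                  * incU F K uξ * (u⁻¹) ^ p) := by
            rw [map_mul, map_inv, hσuα, hMσprod u, hNu]
        _ = (uα⁻¹ * (∏ i ∈ Finset.range p, ∏ j ∈ Finset.range i, galU F K (σ ^ j) u))
              * (u⁻¹) ^ p := by
            rw [mul_inv_rev, mul_right_comm _ (incU F K uξ), mul_mul_mul_comm, inv_mul_cancel,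
              mul_one, mul_assoc]
    -- norm of w
    have hNw : normU F K (∏ i ∈ Finset.range p, ∏ j ∈ Finset.range i, galU F K (σ ^ j) u)
        = uξ ^ (∑ i ∈ Finset.range p, i) := by
      have hin : ∀ i : ℕ, normU F K (∏ j ∈ Finset.range i, galU F K (σ ^ j) u) = uξ ^ i := by
        intro i
        rw [map_prod, Finset.prod_congr rfl fun j _ => (hninvU (σ ^ j) u).trans hNu,
          Finset.prod_const, Finset.card_range]
      rw [map_prod, Finset.prod_congr rfl fun i _ => hin i, Finset.prod_pow_eq_pow_sum]
    have hNγ : normU F K (uα⁻¹ * (∏ i ∈ Finset.range p, ∏ j ∈ Finset.range i, galU F K (σ ^ j) u))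
        = ua⁻¹ := by
      rw [map_mul, map_inv, hNuα, hNw, mul_inv_rev, mul_assoc, inv_mul_cancel, mul_one]
    obtain ⟨n, hn⟩ := Subgroup.mem_closure_singleton.mp hy
    refine ⟨(mkJ p K (uα⁻¹ * (∏ i ∈ Finset.range p, ∏ j ∈ Finset.range i, galU F K (σ ^ j) u)))
        ^ (-n), Subgroup.zpow_mem _ (hfix_of _ ⟨u⁻¹, hσγ⟩) _, ?_⟩
    rw [map_zpow, hnormJmk, hNγ, map_inv, zpow_neg, inv_zpow]
    exact (inv_inv _).trans hn
end
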